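/- Let the memory recurrent matrix V_m be the N_m×N_m cyclic permutation matrix C (ones on the subdiagonal and a 1 in the top-right corner), let O and W_h be N_h×N_h real matrices, W_m an N_h×N_m real matrix, α, β reals, and D a diagonal N_h×N_h real matrix. Then the spectral radius of the ResRMN Jacobian J = [[C, 0], [β·D·W_m·C, α·O + β·D·W_h]] satisfies ρ(J) ≥ 1; i.e. the ResRMN with a cyclic orthogonal memory reservoir always operates with spectral radius at least 1 (at the edge of stability), regardless of the tuning of the non-linear module. -/

import Mathlib

open Matrix

/-- The cyclic permutation matrix of size `N`: ones on the subdiagonal and a single `1`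
in the top-right corner, i.e. `C i j = 1` iff `i ≡ j + 1 (mod N)`. -/
def cyclicMatrix (N : ℕ) : Matrix (Fin N) (Fin N) ℝ :=
  Matrix.of fun i j => if (i : ℕ) = ((j : ℕ) + 1) % N then 1 else 0

/-- The set of complex eigenvalues of a real square matrix. -/
noncomputable def realMatrixSpec {n : Type*} [Fintype n] [DecidableEq n]
    (M : Matrix n n ℝ) : Set ℂ :=
  {μ : ℂ | ((M.map (Complex.ofReal)) - μ • (1 : Matrix n n ℂ)).det = 0}

/-- The spectral radius of a real square matrix: the maximum (supremum) of the
absolute values of its complex eigenvalues. -/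
noncomputable def realMatrixSpecRad {n : Type*} [Fintype n] [DecidableEq n]
    (M : Matrix n n ℝ) : ℝ :=
  sSup ((fun z : ℂ => ‖z‖) '' realMatrixSpec M)

lemma eval_charpoly' {n : Type*} [Fintype n] [DecidableEq n] (N : Matrix n n ℂ) (μ : ℂ) :
    N.charpoly.eval μ = (μ • (1 : Matrix n n ℂ) - N).det := by
  rw [Matrix.charpoly, eval_det, matPolyEquiv_charmatrix]
  simp [smul_eq_diagonal_mul]

lemma spec_finite {n : Type*} [Fintype n] [DecidableEq n] (M : Matrix n n ℝ) :
    (realMatrixSpec M).Finite := by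
  set N := M.map (Complex.ofReal)
  have hsub : realMatrixSpec M ⊆ {μ : ℂ | N.charpoly.IsRoot μ} := by
    intro μ hμ
    simp only [realMatrixSpec, Set.mem_setOf_eq] at hμ ⊢
    rw [Polynomial.IsRoot, eval_charpoly', ← neg_sub, det_neg]
    simp [N, hμ]
  exact (Polynomial.finite_setOf_isRoot N.charpoly_monic.ne_zero).subset hsub

lemma cyclic_one_mem {Nm : ℕ} (hNm : 0 < Nm) :
    (((cyclicMatrix Nm).map (Complex.ofReal)) - (1:ℂ) • (1 : Matrix (Fin Nm) (Fin Nm) ℂ)).det = 0 := by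
  haveI : NeZero Nm := ⟨hNm.ne'⟩
  rw [← Matrix.exists_mulVec_eq_zero_iff]
  refine ⟨fun _ => 1, ?_, ?_⟩
  · intro h
    have := congrFun h ⟨0, hNm⟩
    simp at this
  · have hval : ∀ j : Fin Nm, ((j + 1 : Fin Nm) : ℕ) = ((j : ℕ) + 1) % Nm := by
      intro j
      rw [Fin.val_add, Nat.add_mod (j : ℕ) 1]
      have h1 : ((1 : Fin Nm) : ℕ) = 1 % Nm := rfl
      have h2 : (j : ℕ) % Nm = (j : ℕ) := Nat.mod_eq_of_lt j.isLt
      rw [h1, h2]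
    have key : ∀ i j : Fin Nm, ((i : ℕ) = ((j : ℕ) + 1) % Nm) ↔ j = i - 1 := by
      intro i j
      constructor
      · intro h
        have hij : j + 1 = i := Fin.val_injective (by rw [hval]; exact h.symm)
        exact eq_sub_of_add_eq hij
      · intro h
        subst h
        rw [← hval]
        simp
    funext i
    have hentry : ∀ x : Fin Nm, (((cyclicMatrix Nm).map (Complex.ofReal)
          - (1 : Matrix (Fin Nm) (Fin Nm) ℂ)) i x) * (1 : ℂ)
        = (if x = i - 1 then (1:ℂ) else 0) - (if i = x then (1:ℂ) else 0) := by
      intro x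
      simp only [Matrix.sub_apply, map_apply, cyclicMatrix, of_apply, one_apply, mul_one, ← key i x]
      split <;> split <;> simp
    rw [one_smul]
    simp only [mulVec, dotProduct, Pi.zero_apply]
    rw [Finset.sum_congr rfl (fun x _ => hentry x), Finset.sum_sub_distrib]
    simp

/-- when the memory recurrent matrix is the cyclic permutation matrix `C`,
the ResRMN Jacobian `J = [[C, 0], [β·D·W_m·C, α·O + β·D·W_h]]` (with `D` diagonal) has
spectral radius at least `1`, regardless of the tuning of the non-linear module. -/
theorem resRMN_cyclic_memory_edge_of_stability
    {Nm Nh : ℕ} (hNm : 0 < Nm)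
    (O Wh : Matrix (Fin Nh) (Fin Nh) ℝ)
    (Wm : Matrix (Fin Nh) (Fin Nm) ℝ)
    (α β : ℝ)
    (D : Matrix (Fin Nh) (Fin Nh) ℝ) (hD : D.IsDiag)
    (J : Matrix (Fin Nm ⊕ Fin Nh) (Fin Nm ⊕ Fin Nh) ℝ)
    (hJ : J = Matrix.fromBlocks (cyclicMatrix Nm) 0
      (β • (D * Wm * cyclicMatrix Nm)) (α • O + β • (D * Wh))) :
    1 ≤ realMatrixSpecRad J := by
  have hmem : (1 : ℂ) ∈ realMatrixSpec J := by
    simp only [realMatrixSpec, Set.mem_setOf_eq, hJ]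
    have hmap : (Matrix.fromBlocks (cyclicMatrix Nm) 0
        (β • (D * Wm * cyclicMatrix Nm)) (α • O + β • (D * Wh))).map (Complex.ofReal)
        = Matrix.fromBlocks ((cyclicMatrix Nm).map Complex.ofReal)
          (0 : Matrix (Fin Nm) (Fin Nh) ℂ)
          ((β • (D * Wm * cyclicMatrix Nm)).map Complex.ofReal)
          ((α • O + β • (D * Wh)).map Complex.ofReal) := by
      ext (i|i) (j|j) <;> rfl
    rw [hmap]
    have h1 : ((1:ℂ) • (1 : Matrix (Fin Nm ⊕ Fin Nh) (Fin Nm ⊕ Fin Nh) ℂ))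
        = Matrix.fromBlocks ((1:ℂ) • 1) 0 0 ((1:ℂ) • 1) := by
      simp [Matrix.fromBlocks_one]
    rw [h1, sub_eq_add_neg, Matrix.fromBlocks_neg, Matrix.fromBlocks_add, neg_zero, add_zero, Matrix.det_fromBlocks_zero₁₂]
    · rw [show ((cyclicMatrix Nm).map Complex.ofReal + -((1:ℂ) • 1))
          = ((cyclicMatrix Nm).map Complex.ofReal - (1:ℂ) • 1) from (sub_eq_add_neg _ _).symm,
        cyclic_one_mem hNm, zero_mul]
  have h1 : (1 : ℝ) ∈ (fun z : ℂ => ‖z‖) '' realMatrixSpec J := ⟨1, hmem, by simp⟩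
  have hbdd : BddAbove ((fun z : ℂ => ‖z‖) '' realMatrixSpec J) :=
    ((spec_finite J).image _).bddAbove
  exact le_csSup hbdd h1
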